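/- Let U and V be monoids and let S = U ∗ V be their monoid free product (coproduct of monoids). If the group of units of V is trivial, then the group of units of S is (the canonical image of) the group of units of U; in particular, every unit of S lies in the image of U. -/

import Mathlib

open Monoid

namespace CoprodUnitsAux

variable {U V : Type*} [Monoid U] [Monoid V]

/-- A letter is good if it is not an identity element. -/
def good : U ⊕ V → Prop := Sum.elim (· ≠ 1) (· ≠ 1)

/-- Reduced words: all letters non-identity, and adjacent letters from different factors. -/
def Red (l : List (U ⊕ V)) : Prop :=
  (∀ x ∈ l, good x) ∧ l.Chain' (fun x y => x.isLeft ≠ y.isLeft)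

lemma red_nil : Red ([] : List (U ⊕ V)) := ⟨by simp, List.isChain_nil⟩

lemma Red.tail {x : U ⊕ V} {l : List (U ⊕ V)} (h : Red (x :: l)) : Red l :=
  ⟨fun y hy => h.1 y (List.mem_cons_of_mem _ hy), h.2.tail⟩

open scoped Classical in
/-- Prepend a letter to a word, merging/cancelling with the head if from the same factor. -/
noncomputable def pre : U ⊕ V → List (U ⊕ V) → List (U ⊕ V)
  | .inl u, [] => if u = 1 then [] else [.inl u]
  | .inl u, .inl u' :: r => if u * u' = 1 then r else .inl (u * u') :: r
  | .inl u, .inr v' :: r => if u = 1 then .inr v' :: r else .inl u :: .inr v' :: r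
  | .inr v, [] => if v = 1 then [] else [.inr v]
  | .inr v, .inr v' :: r => if v * v' = 1 then r else .inr (v * v') :: r
  | .inr v, .inl u' :: r => if v = 1 then .inl u' :: r else .inr v :: .inl u' :: r

lemma pre_red (x : U ⊕ V) (r : List (U ⊕ V)) (hr : Red r) : Red (pre x r) := by
  obtain ⟨hg, hc⟩ := hr
  match x, r with
  | .inl u, [] =>
    simp only [pre]; split_ifs with h
    · exact red_nil
    · exact ⟨by simp [good, h], List.isChain_singleton _⟩
  | .inl u, .inl u' :: r =>
    simp only [pre]; split_ifs with h
    · exact Red.tail ⟨hg, hc⟩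
    · refine ⟨?_, ?_⟩
      · intro y hy
        rcases List.mem_cons.mp hy with rfl | hy
        · exact h
        · exact hg y (List.mem_cons_of_mem _ hy)
      · rw [List.Chain', List.isChain_cons] at hc ⊢
        exact ⟨fun y hy => hc.1 y hy, hc.2⟩
  | .inl u, .inr v' :: r =>
    simp only [pre]; split_ifs with h
    · exact ⟨hg, hc⟩
    · refine ⟨?_, ?_⟩
      · intro y hy
        rcases List.mem_cons.mp hy with rfl | hy
        · exact h
        · exact hg y hy
      · rw [List.Chain', List.isChain_cons_cons]
        exact ⟨by simp, hc⟩
  | .inr v, [] =>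
    simp only [pre]; split_ifs with h
    · exact red_nil
    · exact ⟨by simp [good, h], List.isChain_singleton _⟩
  | .inr v, .inr v' :: r =>
    simp only [pre]; split_ifs with h
    · exact Red.tail ⟨hg, hc⟩
    · refine ⟨?_, ?_⟩
      · intro y hy
        rcases List.mem_cons.mp hy with rfl | hy
        · exact h
        · exact hg y (List.mem_cons_of_mem _ hy)
      · rw [List.Chain', List.isChain_cons] at hc ⊢
        exact ⟨fun y hy => hc.1 y hy, hc.2⟩
  | .inr v, .inl u' :: r =>
    simp only [pre]; split_ifs with h
    · exact ⟨hg, hc⟩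
    · refine ⟨?_, ?_⟩
      · intro y hy
        rcases List.mem_cons.mp hy with rfl | hy
        · exact h
        · exact hg y hy
      · rw [List.Chain', List.isChain_cons_cons]
        exact ⟨by simp, hc⟩

lemma pre_one_l {r : List (U ⊕ V)} (hr : Red r) : pre (.inl (1 : U)) r = r := by
  match r with
  | [] => simp [pre]
  | .inl u' :: r =>
    have : u' ≠ 1 := hr.1 (.inl u') (by simp)
    simp [pre, this]
  | .inr v' :: r => simp [pre]

lemma pre_one_r {r : List (U ⊕ V)} (hr : Red r) : pre (.inr (1 : V)) r = r := by
  match r with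
  | [] => simp [pre]
  | .inr v' :: r =>
    have : v' ≠ 1 := hr.1 (.inr v') (by simp)
    simp [pre, this]
  | .inl u' :: r => simp [pre]

lemma pre_assoc_l (u u' : U) {r : List (U ⊕ V)} (hr : Red r) :
    pre (.inl (u * u')) r = pre (.inl u) (pre (.inl u') r) := by
  match r with
  | [] =>
    by_cases h : u' = 1
    · subst h; rw [mul_one, pre_one_l hr]
    · simp only [pre, if_neg h]
  | .inl w :: r' =>
    by_cases h1 : u' * w = 1
    · have hu : u * u' * w = u := by rw [mul_assoc, h1, mul_one]
      simp only [pre, if_pos h1]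
      match r' with
      | [] => simp only [pre]; rw [hu]
      | .inr v :: r'' => simp only [pre]; rw [hu]
      | .inl z :: r'' =>
        exfalso
        have := (List.isChain_cons_cons.mp hr.2).1
        simp at this
    · simp only [pre, if_neg h1]
      rw [mul_assoc]
  | .inr v :: r' =>
    by_cases h : u' = 1
    · subst h; rw [mul_one, pre_one_l hr]
    · simp only [pre, if_neg h]

lemma pre_assoc_r (v v' : V) {r : List (U ⊕ V)} (hr : Red r) :
    pre (.inr (v * v')) r = pre (.inr v) (pre (.inr v') r) := by
  match r with
  | [] =>
    by_cases h : v' = 1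
    · subst h; rw [mul_one, pre_one_r hr]
    · simp only [pre, if_neg h]
  | .inr w :: r' =>
    by_cases h1 : v' * w = 1
    · have hv : v * v' * w = v := by rw [mul_assoc, h1, mul_one]
      simp only [pre, if_pos h1]
      match r' with
      | [] => simp only [pre]; rw [hv]
      | .inl u :: r'' => simp only [pre]; rw [hv]
      | .inr z :: r'' =>
        exfalso
        have := (List.isChain_cons_cons.mp hr.2).1
        simp at this
    · simp only [pre, if_neg h1]
      rw [mul_assoc]
  | .inl u :: r' =>
    by_cases h : v' = 1
    · subst h; rw [mul_one, pre_one_r hr]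
    · simp only [pre, if_neg h]

/-- The space of reduced words. -/
def X (U V : Type*) [Monoid U] [Monoid V] := {l : List (U ⊕ V) // Red l}

noncomputable def preX (x : U ⊕ V) (r : X U V) : X U V := ⟨pre x r.1, pre_red x r.1 r.2⟩

noncomputable def fU : U →* Function.End (X U V) where
  toFun u := fun r => preX (.inl u) r
  map_one' := funext fun r => Subtype.ext (pre_one_l r.2)
  map_mul' u u' := funext fun r => Subtype.ext (pre_assoc_l u u' r.2)

noncomputable def fV : V →* Function.End (X U V) where
  toFun v := fun r => preX (.inr v) r
  map_one' := funext fun r => Subtype.ext (pre_one_r r.2)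
  map_mul' v v' := funext fun r => Subtype.ext (pre_assoc_r v v' r.2)

noncomputable def phi : Coprod U V →* Function.End (X U V) := Coprod.lift fU fV

noncomputable def nf (s : Coprod U V) : X U V := phi s ⟨[], red_nil⟩

def emb : List (U ⊕ V) → Coprod U V
  | [] => 1
  | .inl u :: r => Coprod.inl u * emb r
  | .inr v :: r => Coprod.inr v * emb r

lemma emb_pre (x : U ⊕ V) (r : List (U ⊕ V)) :
    emb (pre x r) = emb [x] * emb r := by
  match x, r with
  | .inl u, [] =>
    simp only [pre]; split_ifs with h
    · subst h; simp [emb]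
    · simp [emb]
  | .inl u, .inl u' :: r =>
    simp only [pre]; split_ifs with h
    · simp [emb, mul_one, ← mul_assoc, ← map_mul, h]
    · simp [emb, mul_one, ← mul_assoc, ← map_mul]
  | .inl u, .inr v' :: r =>
    simp only [pre]; split_ifs with h
    · subst h; simp [emb]
    · simp [emb]
  | .inr v, [] =>
    simp only [pre]; split_ifs with h
    · subst h; simp [emb]
    · simp [emb]
  | .inr v, .inr v' :: r =>
    simp only [pre]; split_ifs with h
    · simp [emb, mul_one, ← mul_assoc, ← map_mul, h]
    · simp [emb, mul_one, ← mul_assoc, ← map_mul]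
  | .inr v, .inl u' :: r =>
    simp only [pre]; split_ifs with h
    · subst h; simp [emb]
    · simp [emb]

lemma phi_inl (u : U) : (phi (Coprod.inl u) : Function.End (X U V)) = fU u := by
  unfold phi; exact Coprod.lift_apply_inl fU fV u

lemma phi_inr (v : V) : (phi (Coprod.inr v) : Function.End (X U V)) = fV v := by
  unfold phi; exact Coprod.lift_apply_inr fU fV v

lemma phi_app (s : Coprod U V) (r : X U V) : emb (phi s r).1 = s * emb r.1 := by
  induction s using Coprod.induction_on generalizing r with
  | inl m =>
    rw [phi_inl]
    show emb (pre (.inl m) r.1) = _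
    rw [emb_pre]
    simp [emb]
  | inr n =>
    rw [phi_inr]
    show emb (pre (.inr n) r.1) = _
    rw [emb_pre]
    simp [emb]
  | mul x y hx hy =>
    have h : phi (x * y) r = phi x (phi y r) := by rw [map_mul]; rfl
    rw [h, hx, hy, mul_assoc]

lemma emb_nf (s : Coprod U V) : emb (nf s).1 = s := by
  have := phi_app s ⟨[], red_nil⟩
  simpa [nf, emb] using this

lemma phi_emb (l : List (U ⊕ V)) (r : X U V) :
    phi (emb l) r = List.foldr preX r l := by
  induction l with
  | nil =>
    show phi 1 r = r
    rw [map_one]; rfl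
  | cons x l ih =>
    match x with
    | .inl u =>
      show phi (Coprod.inl u * emb l) r = preX (.inl u) (List.foldr preX r l)
      rw [map_mul]
      show phi (Coprod.inl u) (phi (emb l) r) = _
      rw [ih, phi_inl]
      rfl
    | .inr v =>
      show phi (Coprod.inr v * emb l) r = preX (.inr v) (List.foldr preX r l)
      rw [map_mul]
      show phi (Coprod.inr v) (phi (emb l) r) = _
      rw [ih, phi_inr]
      rfl

lemma foldr_val (l : List (U ⊕ V)) (r : X U V) :
    (List.foldr preX r l).1 = List.foldr pre r.1 l := by
  induction l with
  | nil => rfl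
  | cons x l ih => simp [preX, ih]

def invPair : U ⊕ V → U ⊕ V → Prop
  | .inl u, .inl u' => u * u' = 1
  | .inr v, .inr v' => v * v' = 1
  | _, _ => False

lemma invPair_isLeft {x y : U ⊕ V} (h : invPair x y) : x.isLeft = y.isLeft := by
  match x, y with
  | .inl u, .inl u' => rfl
  | .inr v, .inr v' => rfl
  | .inl u, .inr v' => exact h.elim
  | .inr v, .inl u' => exact h.elim

lemma contra_aux {a₁ : List (U ⊕ V)} {c : U ⊕ V} {d : List (U ⊕ V)}
    (hlast : ∀ ξ ∈ a₁.getLast?, ξ.isLeft ≠ c.isLeft)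
    (F : List.Forall₂ invPair a₁.reverse (c :: d)) : False := by
  rcases List.forall₂_cons_right_iff.mp F with ⟨ξ, l', hinv, _, hrev⟩
  have hmem : ξ ∈ a₁.getLast? := by
    rw [← List.head?_reverse, hrev]; simp
  exact hlast ξ hmem (invPair_isLeft hinv)

lemma cancel (a : List (U ⊕ V)) : ∀ b : List (U ⊕ V), Red a → Red b →
    List.foldr pre b a = [] → List.Forall₂ invPair a.reverse b := by
  induction a using List.reverseRecOn with
  | nil =>
    intro b _ _ h
    simp only [List.foldr_nil] at h
    subst h; simp
  | append_singleton a₁ x ih =>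
    intro b ha hb h
    rw [List.foldr_append] at h
    simp only [List.foldr_cons, List.foldr_nil] at h
    have ha₁ : Red a₁ := ⟨fun y hy => ha.1 y (by simp [hy]), (List.isChain_append.mp ha.2).1⟩
    have hgx : good x := ha.1 x (by simp)
    have hlast : ∀ ξ ∈ a₁.getLast?, ξ.isLeft ≠ x.isLeft := by
      intro ξ hξ
      exact (List.isChain_append.mp ha.2).2.2 ξ hξ x (by simp)
    match x, b with
    | .inl u, [] =>
      have hu : u ≠ 1 := hgx
      rw [show pre (Sum.inl u) ([] : List (U ⊕ V)) = [Sum.inl u] from by simp [pre, hu]] at h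
      have F := ih [Sum.inl u] ha₁ ⟨by simp [good, hu], List.isChain_singleton _⟩ h
      exact (contra_aux (by simpa using hlast) F).elim
    | .inl u, .inl u' :: b₁ =>
      by_cases hc : u * u' = 1
      · rw [show pre (Sum.inl u) (Sum.inl u' :: b₁) = b₁ from by simp [pre, hc]] at h
        have F := ih b₁ ha₁ hb.tail h
        simp only [List.reverse_append, List.reverse_cons, List.reverse_nil, List.nil_append,
          List.singleton_append]
        exact List.Forall₂.cons (show invPair (Sum.inl u) (Sum.inl u') from hc) F
      · have hred : Red (Sum.inl (u * u') :: b₁) := by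
          have := pre_red (Sum.inl u) (Sum.inl u' :: b₁) hb
          simpa [pre, hc] using this
        rw [show pre (Sum.inl u) (Sum.inl u' :: b₁) = Sum.inl (u * u') :: b₁ from by
          simp [pre, hc]] at h
        exact (contra_aux (by simpa using hlast) (ih _ ha₁ hred h)).elim
    | .inl u, .inr v' :: b₁ =>
      have hu : u ≠ 1 := hgx
      have hred : Red (Sum.inl u :: Sum.inr v' :: b₁) := by
        have := pre_red (Sum.inl u) (Sum.inr v' :: b₁) hb
        simpa [pre, hu] using this
      rw [show pre (Sum.inl u) (Sum.inr v' :: b₁) = Sum.inl u :: Sum.inr v' :: b₁ from by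
        simp [pre, hu]] at h
      exact (contra_aux (by simpa using hlast) (ih _ ha₁ hred h)).elim
    | .inr v, [] =>
      have hv : v ≠ 1 := hgx
      rw [show pre (Sum.inr v) ([] : List (U ⊕ V)) = [Sum.inr v] from by simp [pre, hv]] at h
      have F := ih [Sum.inr v] ha₁ ⟨by simp [good, hv], List.isChain_singleton _⟩ h
      exact (contra_aux (by simpa using hlast) F).elim
    | .inr v, .inr v' :: b₁ =>
      by_cases hc : v * v' = 1
      · rw [show pre (Sum.inr v) (Sum.inr v' :: b₁) = b₁ from by simp [pre, hc]] at h
        have F := ih b₁ ha₁ hb.tail h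
        simp only [List.reverse_append, List.reverse_cons, List.reverse_nil, List.nil_append,
          List.singleton_append]
        exact List.Forall₂.cons (show invPair (Sum.inr v) (Sum.inr v') from hc) F
      · have hred : Red (Sum.inr (v * v') :: b₁) := by
          have := pre_red (Sum.inr v) (Sum.inr v' :: b₁) hb
          simpa [pre, hc] using this
        rw [show pre (Sum.inr v) (Sum.inr v' :: b₁) = Sum.inr (v * v') :: b₁ from by
          simp [pre, hc]] at h
        exact (contra_aux (by simpa using hlast) (ih _ ha₁ hred h)).elim
    | .inr v, .inl u' :: b₁ =>
      have hv : v ≠ 1 := hgx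
      have hred : Red (Sum.inr v :: Sum.inl u' :: b₁) := by
        have := pre_red (Sum.inr v) (Sum.inl u' :: b₁) hb
        simpa [pre, hv] using this
      rw [show pre (Sum.inr v) (Sum.inl u' :: b₁) = Sum.inr v :: Sum.inl u' :: b₁ from by
        simp [pre, hv]] at h
      exact (contra_aux (by simpa using hlast) (ih _ ha₁ hred h)).elim

lemma forall₂_both {α β : Type*} {R S : α → β → Prop} :
    ∀ {l : List α} {m : List β}, List.Forall₂ R l m → List.Forall₂ S l m →
      ∀ ξ ∈ l, ∃ η ∈ m, R ξ η ∧ S ξ η := by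
  intro l m h1
  induction h1 with
  | nil => intro _ ξ hξ; simp at hξ
  | @cons a b l' m' hR _ ih =>
    intro h2 ξ hξ
    rcases List.forall₂_cons.mp h2 with ⟨hS, h2'⟩
    rcases List.mem_cons.mp hξ with rfl | hξ
    · exact ⟨b, by simp, hR, hS⟩
    · rcases ih h2' ξ hξ with ⟨η, hη, hRS⟩
      exact ⟨η, List.mem_cons_of_mem _ hη, hRS⟩

lemma final_step {A : List (U ⊕ V)}
    (hchain : A.Chain' (fun x y => x.isLeft ≠ y.isLeft))
    (Hunit : ∀ ξ ∈ A, ∃ u : U, ξ = Sum.inl u ∧ IsUnit u) :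
    ∃ u : U, IsUnit u ∧ Coprod.inl u = emb A := by
  match A with
  | [] => exact ⟨1, isUnit_one, by simp [emb]⟩
  | [ξ] =>
    rcases Hunit ξ (by simp) with ⟨u, rfl, hu⟩
    exact ⟨u, hu, by simp [emb]⟩
  | ξ :: ξ₂ :: l₂ =>
    rcases Hunit ξ (by simp) with ⟨u, rfl, -⟩
    rcases Hunit ξ₂ (by simp) with ⟨u₂, rfl, -⟩
    have := (List.isChain_cons_cons.mp hchain).1
    simp at this

lemma key {s t : Coprod U V} (h : s * t = 1) :
    List.foldr pre (nf t).1 (nf s).1 = [] := by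
  have h1 : phi s (nf t) = nf (s * t) := by
    show phi s (phi t ⟨[], red_nil⟩) = phi (s * t) ⟨[], red_nil⟩
    rw [map_mul]; rfl
  have h2 : phi s (nf t) = List.foldr preX (nf t) (nf s).1 := by
    have h3 := phi_emb (nf s).1 (nf t)
    rw [emb_nf] at h3
    exact h3
  have hone : (nf (1 : Coprod U V)).1 = [] := by
    unfold nf; rw [map_one]; rfl
  have h4 : List.foldr preX (nf t) (nf s).1 = nf 1 := by rw [← h2, h1, h]
  have hval := congrArg Subtype.val h4
  rw [foldr_val, hone] at hval
  exact hval

end CoprodUnitsAux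

open CoprodUnitsAux in
/-- If `V` has trivial group of units, then the units of the free product `U ∗ V`
are exactly the images of the units of `U` under the canonical embedding. -/
theorem units_of_coprod_of_trivial_units {U V : Type*} [Monoid U] [Monoid V]
    (hV : ∀ v : V, IsUnit v → v = 1) :
    ∀ s : Coprod U V, IsUnit s ↔ ∃ u : U, IsUnit u ∧ Coprod.inl u = s := by
  intro s
  constructor
  · rintro ⟨w, rfl⟩
    have hst : (w : Coprod U V) * ((w⁻¹ : _) : Coprod U V) = 1 := w.mul_inv
    have hts : ((w⁻¹ : _) : Coprod U V) * (w : Coprod U V) = 1 := w.inv_mul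
    have F1 := cancel _ _ (nf (w : Coprod U V)).2 (nf ((w⁻¹ : _) : Coprod U V)).2 (key hst)
    have F2 := cancel _ _ (nf ((w⁻¹ : _) : Coprod U V)).2 (nf (w : Coprod U V)).2 (key hts)
    have F2' : List.Forall₂ invPair (nf ((w⁻¹ : _) : Coprod U V)).1
        (nf (w : Coprod U V)).1.reverse := by
      have := List.rel_reverse F2
      simpa using this
    have G : List.Forall₂ (fun ξ η => invPair η ξ) (nf (w : Coprod U V)).1.reverse
        (nf ((w⁻¹ : _) : Coprod U V)).1 := List.Forall₂.flip F2'
    have H := forall₂_both F1 G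
    have Hunit : ∀ ξ ∈ (nf (w : Coprod U V)).1, ∃ u : U, ξ = Sum.inl u ∧ IsUnit u := by
      intro ξ hξ
      rcases H ξ (List.mem_reverse.mpr hξ) with ⟨η, _, h1, h2⟩
      match ξ, η with
      | Sum.inl u, Sum.inl u' => exact ⟨u, rfl, ⟨⟨u, u', h1, h2⟩, rfl⟩⟩
      | Sum.inl u, Sum.inr v' => exact h1.elim
      | Sum.inr v, Sum.inl u' => exact h1.elim
      | Sum.inr v, Sum.inr v' =>
        have hv : IsUnit v := ⟨⟨v, v', h1, h2⟩, rfl⟩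
        exact absurd (hV v hv) ((nf (w : Coprod U V)).2.1 _ hξ)
    obtain ⟨u, hu, hh⟩ := final_step (nf (w : Coprod U V)).2.2 Hunit
    exact ⟨u, hu, by rw [hh, emb_nf]⟩
  · rintro ⟨u, hu, rfl⟩
    exact hu.map Coprod.inl
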